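/- Let X_a, X_b be linear subspaces of ℝⁿ with X_a ∩ X_b = {0}, and let π^b denote the orthogonal projection onto X_b^⊥. Let μ > 0, δ > 0, let ψ : X_a^⊥ → ℂ be a Schwartz function, and let V : X_b^⊥ → ℂ be a measurable function satisfying |V(w)| ≤ δ(1+‖w‖)^{−μ} for all w ∈ X_b^⊥. Then there exists a constant C > 0, depending only on X_a, X_b, μ and ψ, such that for all x_a ∈ X_a: ( ∫_{X_a^⊥} |V(π^b(x_a + w))|² |ψ(w)|² dw )^{1/2} ≤ C δ (1+‖x_a‖)^{−μ}. -/

import Mathlib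

set_option maxHeartbeats 1000000


open Submodule MeasureTheory

/-- The `L²`-in-`X_a^⊥` estimate behind the `(Id − E_a) I_a E_a` bound: the square
integral of a decaying potential against a Schwartz bound state decays at rate `μ`
in `x_a`, with constant depending only on `X_a`, `X_b`, `μ`, `ψ`. -/
theorem potential_bound_state_L2_decay (n : ℕ)
    (Xa Xb : Submodule ℝ (EuclideanSpace ℝ (Fin n))) (hXab : Xa ⊓ Xb = ⊥)
    (μ : ℝ) (hμ : 0 < μ)
    (ψ : SchwartzMap Xaᗮ ℂ) :
    ∃ C : ℝ, 0 < C ∧ ∀ (δ : ℝ) (V : Xbᗮ → ℂ), 0 < δ →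
      Measurable V →
      (∀ w : Xbᗮ, ‖V w‖ ≤ δ * (1 + ‖w‖) ^ (-μ)) →
      ∀ xa : Xa,
        (∫ w : Xaᗮ,
            ‖V (orthogonalProjection Xbᗮ ((xa : EuclideanSpace ℝ (Fin n)) + w))‖ ^ 2 *
              ‖ψ w‖ ^ 2) ^ (1/2 : ℝ) ≤
          C * δ * (1 + ‖(xa : EuclideanSpace ℝ (Fin n))‖) ^ (-μ) := by
  classical
  -- the projection restricted to `Xa` is injective, hence antilipschitz
  set f : Xa →ₗ[ℝ] Xbᗮ := ((orthogonalProjection Xbᗮ).toLinearMap).comp Xa.subtype with hf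
  have hker : LinearMap.ker f = ⊥ := by
    rw [LinearMap.ker_eq_bot']
    intro m hm
    have h1 : (m : EuclideanSpace ℝ (Fin n)) ∈ Xbᗮᗮ := orthogonalProjection_eq_zero_iff.mp hm
    rw [Submodule.orthogonal_orthogonal] at h1
    have h2 : (m : EuclideanSpace ℝ (Fin n)) ∈ Xa ⊓ Xb := ⟨m.2, h1⟩
    rw [hXab] at h2
    exact Subtype.ext (by simpa using h2)
  obtain ⟨K, hK0, hKf⟩ := f.exists_antilipschitzWith hker
  set K' : ℝ := max (K : ℝ) 1 with hK'
  have hK'1 : (1 : ℝ) ≤ K' := le_max_right _ _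
  have hK'0 : (0 : ℝ) < K' := lt_of_lt_of_le one_pos hK'1
  -- Schwartz data
  set k : ℕ := ⌈2 * μ⌉₊ with hk
  set B : ℝ := (SchwartzMap.seminorm ℝ 0 0) ψ with hBdef
  have hB : ∀ w, ‖ψ w‖ ≤ B := fun w => ψ.norm_le_seminorm ℝ w
  have hB0 : 0 ≤ B := le_trans (norm_nonneg _) (hB 0)
  set g : Xaᗮ → ℝ := fun w => (1 + ‖w‖) ^ (2 * μ) * ‖ψ w‖ ^ 2 with hgdef
  have hg0 : ∀ w, 0 ≤ g w := fun w => by positivity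
  have hgcont : Continuous g := by
    apply Continuous.mul
    · apply Continuous.rpow_const (continuous_const.add continuous_norm)
      intro w; left; exact (by positivity : (0:ℝ) < 1 + ‖w‖).ne'
    · exact ψ.continuous.norm.pow 2
  have hpow2 : ∀ a : ℝ, 0 < a → a ^ (2 * μ) = (a ^ μ) ^ 2 := by
    intro a ha
    rw [two_mul, Real.rpow_add ha, sq]
  -- a pointwise bound making `g` integrable
  have hbinom : ∀ a : ℝ, 0 ≤ a → (1 + a) ^ k ≤ 2 ^ k * (1 + a ^ k) := by
    intro a ha
    rcases le_total a 1 with h | h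
    · calc (1 + a) ^ k ≤ 2 ^ k := by
            apply pow_le_pow_left₀ (by positivity) (by linarith)
        _ ≤ 2 ^ k * (1 + a ^ k) := le_mul_of_one_le_right (by positivity) (by nlinarith [pow_nonneg ha k])
    · calc (1 + a) ^ k ≤ (2 * a) ^ k := by
            apply pow_le_pow_left₀ (by positivity) (by linarith)
        _ = 2 ^ k * a ^ k := mul_pow 2 a k
        _ ≤ 2 ^ k * (1 + a ^ k) := mul_le_mul_of_nonneg_left (by linarith) (by positivity)
  have hgmaj : ∀ w, g w ≤ 2 ^ k * B * (‖ψ w‖ + ‖w‖ ^ k * ‖ψ w‖) := by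
    intro w
    have h1 : (1 + ‖w‖) ^ (2 * μ) ≤ (1 + ‖w‖) ^ (k : ℝ) :=
      Real.rpow_le_rpow_of_exponent_le (by linarith [norm_nonneg w]) (Nat.le_ceil _)
    have h2 : (1 + ‖w‖) ^ (k : ℝ) = (1 + ‖w‖) ^ k := Real.rpow_natCast _ k
    have h3 : (1 + ‖w‖) ^ (2 * μ) ≤ 2 ^ k * (1 + ‖w‖ ^ k) := by
      rw [h2] at h1
      exact h1.trans (hbinom _ (norm_nonneg w))
    have h4 : ‖ψ w‖ ^ 2 ≤ B * ‖ψ w‖ := by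
      rw [sq]; exact mul_le_mul_of_nonneg_right (hB w) (norm_nonneg _)
    calc g w ≤ (2 ^ k * (1 + ‖w‖ ^ k)) * (B * ‖ψ w‖) := by
          apply mul_le_mul h3 h4 (by positivity) (by positivity)
      _ = 2 ^ k * B * (‖ψ w‖ + ‖w‖ ^ k * ‖ψ w‖) := by ring
  have hgint : Integrable g := by
    have hmaj : Integrable (fun w : Xaᗮ => 2 ^ k * B * (‖ψ w‖ + ‖w‖ ^ k * ‖ψ w‖)) :=
      ((SchwartzMap.integrable ψ (μ := volume)).norm.add (ψ.integrable_pow_mul volume k)).const_mul _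
    exact hmaj.mono' hgcont.aestronglyMeasurable
      (Filter.Eventually.of_forall fun w => by
        rw [Real.norm_of_nonneg (hg0 w)]; exact hgmaj w)
  set Kg : ℝ := ∫ w, g w with hKgdef
  have hKg0 : 0 ≤ Kg := integral_nonneg hg0
  refine ⟨K' ^ μ * Real.sqrt Kg + 1, by positivity, ?_⟩
  intro δ V hδ hV hVb xa
  set t : ℝ := (1 + ‖(xa : EuclideanSpace ℝ (Fin n))‖) ^ (-μ) with htdef
  have hxpos : (0 : ℝ) < 1 + ‖(xa : EuclideanSpace ℝ (Fin n))‖ := by positivity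
  have ht0 : 0 < t := Real.rpow_pos_of_pos hxpos _
  -- key pointwise decay estimate
  have hkey : ∀ w : Xaᗮ,
      (1 + ‖orthogonalProjection Xbᗮ ((xa : EuclideanSpace ℝ (Fin n)) + w)‖) ^ (-μ) ≤
        K' ^ μ * (1 + ‖w‖) ^ μ * t := by
    intro w
    set p := orthogonalProjection Xbᗮ ((xa : EuclideanSpace ℝ (Fin n)) + w) with hp
    have hxa : ‖(xa : EuclideanSpace ℝ (Fin n))‖ ≤ (K : ℝ) * ‖f xa‖ := by
      have := hKf.le_mul_dist xa 0
      simpa [dist_eq_norm, map_zero] using this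
    have hπw : ‖orthogonalProjection Xbᗮ (w : EuclideanSpace ℝ (Fin n))‖ ≤ ‖w‖ := by
      calc ‖orthogonalProjection Xbᗮ (w : EuclideanSpace ℝ (Fin n))‖
          ≤ ‖orthogonalProjection Xbᗮ‖ * ‖(w : EuclideanSpace ℝ (Fin n))‖ :=
            (orthogonalProjection Xbᗮ).le_opNorm _
        _ ≤ 1 * ‖(w : EuclideanSpace ℝ (Fin n))‖ :=
            mul_le_mul_of_nonneg_right (orthogonalProjection_norm_le Xbᗮ) (norm_nonneg _)
        _ = ‖w‖ := by rw [one_mul]; simp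
    have hpdecomp : p = f xa + orthogonalProjection Xbᗮ (w : EuclideanSpace ℝ (Fin n)) := by
      simp [hp, hf, map_add]
    have hfa : ‖f xa‖ ≤ ‖p‖ + ‖w‖ := by
      have : ‖f xa‖ ≤ ‖p‖ + ‖orthogonalProjection Xbᗮ (w : EuclideanSpace ℝ (Fin n))‖ := by
        have := norm_sub_le p (orthogonalProjection Xbᗮ (w : EuclideanSpace ℝ (Fin n)))
        have heq : f xa = p - orthogonalProjection Xbᗮ (w : EuclideanSpace ℝ (Fin n)) := by
          rw [hpdecomp]; abel
        rw [heq]; exact this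
      linarith
    have hxa2 : ‖(xa : EuclideanSpace ℝ (Fin n))‖ ≤ K' * (‖p‖ + ‖w‖) := by
      calc ‖(xa : EuclideanSpace ℝ (Fin n))‖ ≤ (K : ℝ) * ‖f xa‖ := hxa
        _ ≤ K' * (‖p‖ + ‖w‖) := by
            apply mul_le_mul (le_max_left _ _) hfa (norm_nonneg _) hK'0.le
    have h1 : 1 + ‖(xa : EuclideanSpace ℝ (Fin n))‖ ≤ K' * ((1 + ‖p‖) * (1 + ‖w‖)) := by
      nlinarith [norm_nonneg p, norm_nonneg w, mul_nonneg (norm_nonneg p) (norm_nonneg w)]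
    have hppos : (0 : ℝ) < 1 + ‖p‖ := by positivity
    have hwpos : (0 : ℝ) < 1 + ‖w‖ := by positivity
    have hmono : (1 + ‖(xa : EuclideanSpace ℝ (Fin n))‖) ^ μ ≤
        K' ^ μ * ((1 + ‖p‖) ^ μ * (1 + ‖w‖) ^ μ) := by
      calc (1 + ‖(xa : EuclideanSpace ℝ (Fin n))‖) ^ μ
          ≤ (K' * ((1 + ‖p‖) * (1 + ‖w‖))) ^ μ :=
            Real.rpow_le_rpow (by positivity) h1 hμ.le
        _ = K' ^ μ * ((1 + ‖p‖) ^ μ * (1 + ‖w‖) ^ μ) := by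
            rw [Real.mul_rpow hK'0.le (by positivity), Real.mul_rpow hppos.le hwpos.le]
    rw [htdef, Real.rpow_neg hppos.le, Real.rpow_neg hxpos.le, inv_eq_one_div, inv_eq_one_div,
      mul_one_div, div_le_div_iff₀ (Real.rpow_pos_of_pos hppos μ) (Real.rpow_pos_of_pos hxpos μ),
      one_mul]
    calc (1 + ‖(xa : EuclideanSpace ℝ (Fin n))‖) ^ μ
        ≤ K' ^ μ * ((1 + ‖p‖) ^ μ * (1 + ‖w‖) ^ μ) := hmono
      _ = K' ^ μ * (1 + ‖w‖) ^ μ * (1 + ‖p‖) ^ μ := by ring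
  -- pointwise bound on the integrand
  set D : ℝ := δ ^ 2 * K' ^ (2 * μ) * t ^ 2 with hD
  have hpt : ∀ w : Xaᗮ,
      ‖V (orthogonalProjection Xbᗮ ((xa : EuclideanSpace ℝ (Fin n)) + w))‖ ^ 2 * ‖ψ w‖ ^ 2 ≤
        D * g w := by
    intro w
    set p := orthogonalProjection Xbᗮ ((xa : EuclideanSpace ℝ (Fin n)) + w) with hp
    have h1 : ‖V p‖ ≤ δ * (K' ^ μ * (1 + ‖w‖) ^ μ * t) :=
      (hVb p).trans (mul_le_mul_of_nonneg_left (hkey w) hδ.le)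
    have h2 : ‖V p‖ ^ 2 ≤ (δ * (K' ^ μ * (1 + ‖w‖) ^ μ * t)) ^ 2 :=
      pow_le_pow_left₀ (norm_nonneg _) h1 2
    have h3 : (δ * (K' ^ μ * (1 + ‖w‖) ^ μ * t)) ^ 2 * ‖ψ w‖ ^ 2 = D * g w := by
      rw [hD, hgdef]
      simp only
      rw [hpow2 K' hK'0, hpow2 (1 + ‖w‖) (by positivity)]
      ring
    calc ‖V p‖ ^ 2 * ‖ψ w‖ ^ 2 ≤ (δ * (K' ^ μ * (1 + ‖w‖) ^ μ * t)) ^ 2 * ‖ψ w‖ ^ 2 :=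
          mul_le_mul_of_nonneg_right h2 (by positivity)
      _ = D * g w := h3
  have hDg : Integrable (fun w : Xaᗮ => D * g w) := hgint.const_mul D
  have hIle : (∫ w : Xaᗮ,
      ‖V (orthogonalProjection Xbᗮ ((xa : EuclideanSpace ℝ (Fin n)) + w))‖ ^ 2 * ‖ψ w‖ ^ 2) ≤
      D * Kg := by
    have := integral_mono_of_nonneg
      (Filter.Eventually.of_forall fun w : Xaᗮ => by positivity) hDg
      (Filter.Eventually.of_forall hpt)
    rwa [integral_const_mul, ← hKgdef] at this
  have hI0 : 0 ≤ ∫ w : Xaᗮ,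
      ‖V (orthogonalProjection Xbᗮ ((xa : EuclideanSpace ℝ (Fin n)) + w))‖ ^ 2 * ‖ψ w‖ ^ 2 :=
    integral_nonneg fun w => by positivity
  set x : ℝ := δ * (K' ^ μ * Real.sqrt Kg) * t with hx
  have hx0 : 0 ≤ x := by positivity
  have hDKg : D * Kg = x ^ 2 := by
    have hs : Real.sqrt Kg ^ 2 = Kg := Real.sq_sqrt hKg0
    rw [hx, hD, hpow2 K' hK'0]
    linear_combination (-(δ ^ 2 * (K' ^ μ) ^ 2 * t ^ 2)) * hs
  calc (∫ w : Xaᗮ,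
        ‖V (orthogonalProjection Xbᗮ ((xa : EuclideanSpace ℝ (Fin n)) + w))‖ ^ 2 *
          ‖ψ w‖ ^ 2) ^ (1/2 : ℝ)
      ≤ (x ^ 2) ^ (1/2 : ℝ) := by
        apply Real.rpow_le_rpow hI0 (hDKg ▸ hIle) (by norm_num)
    _ = x := by
        rw [← Real.rpow_natCast x 2, ← Real.rpow_mul hx0]
        norm_num
    _ ≤ (K' ^ μ * Real.sqrt Kg + 1) * δ * t := by
        rw [hx]
        have h5 : K' ^ μ * Real.sqrt Kg ≤ K' ^ μ * Real.sqrt Kg + 1 :=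
          le_add_of_nonneg_right zero_le_one
        calc δ * (K' ^ μ * Real.sqrt Kg) * t ≤ δ * (K' ^ μ * Real.sqrt Kg + 1) * t := by
              apply mul_le_mul_of_nonneg_right
                (mul_le_mul_of_nonneg_left h5 hδ.le) ht0.le
          _ = (K' ^ μ * Real.sqrt Kg + 1) * δ * t := by ring
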